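/- arXiv:2207.06775 — 2 statements merged into one kernel-verified Lean document; each statement's English description precedes it below -/
import Mathlib

section
/- (Propagation of the isometry to non-landmarks.) Let l ≥ d+1, m ≥ 1, let X_L ∈ ℝ^{l×(d+1)} have rank d+1, let X_N ∈ ℝ^{m×(d+1)}, and set A_N := X_N J X_L^⊤. Let T ∈ ℝ^{(d+1)×(d+1)} satisfy T^⊤ J T = J and set X̂_L := X_L T. Then X̂_L^⊤ X̂_L is invertible and A_N X̂_L (X̂_L^⊤ X̂_L)^{−1} J = X_N T; that is, the non-landmark triangulation step applied to the transformed landmark configuration recovers exactly the transformed non-landmark coordinates. -/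
open Matrix Finset

/-- The Lorentz signature matrix `J = diag(1, -1, …, -1)` of size `(d+1) × (d+1)`. -/
noncomputable def lorJ (d : ℕ) : Matrix (Fin (d + 1)) (Fin (d + 1)) ℝ :=
  Matrix.diagonal (fun i => if i = 0 then (1 : ℝ) else -1)

/-- The Lorentz product `x ∘ y = x₁y₁ - (x₂y₂ + ⋯ + x_{d+1}y_{d+1})`. -/
noncomputable def lprod (d : ℕ) (x y : Fin (d + 1) → ℝ) : ℝ :=
  x 0 * y 0 - ∑ i : Fin d, x i.succ * y i.succ

/-- The hyperboloid `H_d = {x : x ∘ x = 1, x₁ > 0}`. -/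
def onHyperboloid (d : ℕ) (x : Fin (d + 1) → ℝ) : Prop :=
  lprod d x x = 1 ∧ 0 < x 0

/-- The inverse hyperbolic cosine. -/
noncomputable def arcosh (x : ℝ) : ℝ :=
  Real.log (x + Real.sqrt (x ^ 2 - 1))

/-- The hyperbolic distance with curvature `-κ`. -/
noncomputable def distH (d : ℕ) (κ : ℝ) (x y : Fin (d + 1) → ℝ) : ℝ :=
  (1 / Real.sqrt κ) * arcosh (lprod d x y)

/-- A positive Lorentz matrix: `Tᵀ J T = J` and `T₁₁ > 0`. -/
def IsPosLorentz (d : ℕ) (T : Matrix (Fin (d + 1)) (Fin (d + 1)) ℝ) : Prop :=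
  Tᵀ * lorJ d * T = lorJ d ∧ 0 < T 0 0

/-- The eigenvalue index selected for column `j` of the `L-hydra` embedding:
column `0` selects eigenvalue index `0` (the largest eigenvalue `λ₁`), and column
`j ≥ 1` selects the `j`-th of the `d` smallest eigenvalues `λ_{l-d+1}, …, λ_l`
(in 0-based indexing: `l - d - 1 + j`). -/
def colIdx {d l : ℕ} (hl : d + 1 ≤ l) (j : Fin (d + 1)) : Fin l :=
  if (j : ℕ) = 0 then ⟨0, by omega⟩ else ⟨l - d - 1 + j, by have := j.isLt; omega⟩

/-- The landmark embedding matrix `X̂_L` with columns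
`√λ₁ q₁, √(−λ_{l−d+1}) q_{l−d+1}, …, √(−λ_l) q_l`. -/
noncomputable def hatXL {d l : ℕ} (hl : d + 1 ≤ l) (Q : Matrix (Fin l) (Fin l) ℝ)
    (lam : Fin l → ℝ) : Matrix (Fin l) (Fin (d + 1)) ℝ :=
  Matrix.of fun i j =>
    (if (j : ℕ) = 0 then Real.sqrt (lam (colIdx hl j))
      else Real.sqrt (-lam (colIdx hl j))) * Q i (colIdx hl j)

/-- The diagonal matrix `diag(1/λ₁, −1/λ_{l−d+1}, …, −1/λ_l)`. -/
noncomputable def hatD {d l : ℕ} (hl : d + 1 ≤ l) (lam : Fin l → ℝ) :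
    Matrix (Fin (d + 1)) (Fin (d + 1)) ℝ :=
  Matrix.diagonal fun j =>
    if (j : ℕ) = 0 then 1 / lam (colIdx hl j) else -(1 / lam (colIdx hl j))

/-- The non-landmark embedding matrix `X̂_N = A_N X̂_L diag(1/λ₁, −1/λ_{l−d+1}, …, −1/λ_l)`. -/
noncomputable def hatXN {d l m : ℕ} (hl : d + 1 ≤ l) (A_N : Matrix (Fin m) (Fin l) ℝ)
    (Q : Matrix (Fin l) (Fin l) ℝ) (lam : Fin l → ℝ) : Matrix (Fin m) (Fin (d + 1)) ℝ :=
  A_N * hatXL hl Q lam * hatD hl lam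

/-- The squared Frobenius norm of a matrix. -/
noncomputable def frobSq {a b : ℕ} (A : Matrix (Fin a) (Fin b) ℝ) : ℝ :=
  ∑ i, ∑ j, (A i j) ^ 2

/-- The Frobenius norm of a matrix. -/
noncomputable def frob {a b : ℕ} (A : Matrix (Fin a) (Fin b) ℝ) : ℝ :=
  Real.sqrt (frobSq A)

lemma lorJ_mul_self (d : ℕ) : lorJ d * lorJ d = 1 := by
  ext i j
  simp only [lorJ, diagonal_mul_diagonal, Matrix.diagonal_apply, Matrix.one_apply]
  split_ifs <;> norm_num

lemma isUnit_of_rank_eq_card {n : ℕ} (B : Matrix (Fin n) (Fin n) ℝ)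
    (h : B.rank = n) : IsUnit B := by
  rw [← Matrix.mulVec_surjective_iff_isUnit]
  have : LinearMap.range B.mulVecLin = ⊤ := by
    apply Submodule.eq_top_of_finrank_eq
    rw [← Matrix.rank, h]
    simp [Module.finrank_fintype_fun_eq_card]
  intro y
  have := this ▸ Submodule.mem_top (x := y) (R := ℝ)
  obtain ⟨x, hx⟩ := this
  exact ⟨x, hx⟩

/-- propagation of the isometry to non-landmarks — the
triangulation step applied to `X̂_L = X_L T` recovers `X_N T`. -/
theorem stmt_13 {d l m : ℕ} (hd : 1 ≤ d) (hl : d + 1 ≤ l) (hm : 1 ≤ m)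
    (X_L : Matrix (Fin l) (Fin (d + 1)) ℝ) (hrank : X_L.rank = d + 1)
    (X_N : Matrix (Fin m) (Fin (d + 1)) ℝ)
    (A_N : Matrix (Fin m) (Fin l) ℝ) (hAN : A_N = X_N * lorJ d * X_Lᵀ)
    (T : Matrix (Fin (d + 1)) (Fin (d + 1)) ℝ) (hT : Tᵀ * lorJ d * T = lorJ d)
    (XhatL : Matrix (Fin l) (Fin (d + 1)) ℝ) (hXhatL : XhatL = X_L * T) :
    IsUnit (XhatLᵀ * XhatL) ∧
    A_N * XhatL * (XhatLᵀ * XhatL)⁻¹ * lorJ d = X_N * T := by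
  have hJ : lorJ d * lorJ d = 1 := lorJ_mul_self d
  have hJu : IsUnit (lorJ d) :=
    @isUnit_of_invertible _ _ _ (invertibleOfLeftInverse _ _ hJ)
  have hB : IsUnit (X_Lᵀ * X_L) := by
    apply isUnit_of_rank_eq_card
    rw [Matrix.rank_transpose_mul_self, hrank]
  -- T is a unit
  have hTu : IsUnit T := by
    have hdet := congrArg Matrix.det hT
    simp only [Matrix.det_mul, Matrix.det_transpose] at hdet
    have hJd : (lorJ d).det ≠ 0 := by
      intro h0
      exact (Matrix.isUnit_iff_isUnit_det _ |>.mp hJu).ne_zero h0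
    rw [Matrix.isUnit_iff_isUnit_det, isUnit_iff_ne_zero]
    intro h0
    rw [h0] at hdet
    simp at hdet
    exact hJd hdet.symm
  have hTtu : IsUnit Tᵀ := (Matrix.isUnit_transpose T).mpr hTu
  have hkey : XhatLᵀ * XhatL = Tᵀ * (X_Lᵀ * X_L) * T := by
    rw [hXhatL, Matrix.transpose_mul]
    simp only [Matrix.mul_assoc]
  have hUnit : IsUnit (XhatLᵀ * XhatL) := by
    rw [hkey]
    exact (hTtu.mul hB).mul hTu
  refine ⟨hUnit, ?_⟩
  have hTT : T * T⁻¹ = 1 := Matrix.mul_nonsing_inv _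
    (by rwa [← Matrix.isUnit_iff_isUnit_det])
  have hBB : (X_Lᵀ * X_L) * (X_Lᵀ * X_L)⁻¹ = 1 := Matrix.mul_nonsing_inv _
    (by rwa [← Matrix.isUnit_iff_isUnit_det])
  have hTinv : Tᵀ⁻¹ = lorJ d * T * lorJ d := by
    apply Matrix.inv_eq_right_inv
    calc Tᵀ * (lorJ d * T * lorJ d) = (Tᵀ * lorJ d * T) * lorJ d := by
          simp only [Matrix.mul_assoc]
    _ = lorJ d * lorJ d := by rw [hT]
    _ = 1 := hJ
  have hinv : (XhatLᵀ * XhatL)⁻¹ = T⁻¹ * ((X_Lᵀ * X_L)⁻¹ * Tᵀ⁻¹) := by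
    rw [hkey, Matrix.mul_inv_rev, Matrix.mul_inv_rev]
  rw [hAN, hinv, hTinv, hXhatL]
  simp only [Matrix.mul_assoc]
  rw [hJ, Matrix.mul_one]
  rw [← Matrix.mul_assoc T T⁻¹, hTT, Matrix.one_mul]
  rw [← Matrix.mul_assoc X_Lᵀ X_L, ← Matrix.mul_assoc (X_Lᵀ * X_L) _, hBB, Matrix.one_mul]
  rw [← Matrix.mul_assoc (lorJ d) (lorJ d), hJ, Matrix.one_mul]
end

section
/- Let l ≥ d+1 and let A_L ∈ ℝ^{l×l} be symmetric with eigenvalues λ₁ ≥ λ₂ ≥ ⋯ ≥ λ_l, and assume λ₁ ≥ 0 and λ_i ≤ 0 for i ≥ l−d+1. Then the minimum of ‖A_L − X J X^⊤‖_F² over all X ∈ ℝ^{l×(d+1)} equals Σ_{i=2}^{l−d} λ_i². In particular, if λ_i = 0 for all 2 ≤ i ≤ l−d, then there exists X ∈ ℝ^{l×(d+1)} with A_L = X J X^⊤ exactly. -/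
open Matrix Finset

lemma quadform_diag {l n : ℕ} (M : Matrix (Fin l) (Fin n) ℝ) (e : Fin n → ℝ)
    (x : Fin l → ℝ) :
    x ⬝ᵥ (M * Matrix.diagonal e * Mᵀ) *ᵥ x = ∑ j, e j * (x ᵥ* M) j ^ 2 := by
  rw [← mulVec_mulVec, ← mulVec_mulVec, dotProduct_mulVec]
  have h1 : Mᵀ *ᵥ x = x ᵥ* M := by rw [mulVec_transpose]
  rw [h1]
  simp [mulVec_diagonal, dotProduct, mul_comm, sq, mul_assoc, mul_left_comm]

lemma conj_diag_entry {l n : ℕ} (M : Matrix (Fin l) (Fin n) ℝ) (e : Fin n → ℝ)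
    (i i' : Fin l) :
    (M * Matrix.diagonal e * Mᵀ) i i' = ∑ j, e j * M i j * M i' j := by
  simp [Matrix.mul_apply, diagonal, Finset.sum_mul]
  congr 1; ext j; ring

lemma frobSq_eq_trace {a b : ℕ} (A : Matrix (Fin a) (Fin b) ℝ) :
    (∑ i, ∑ j, (A i j) ^ 2) = Matrix.trace (Aᵀ * A) := by
  rw [Matrix.trace, Finset.sum_comm]
  simp [Matrix.diag, Matrix.mul_apply, sq]

lemma dot_self_conj {l n : ℕ} (Q : Matrix (Fin l) (Fin n) ℝ) (hQ : Q * Qᵀ = 1)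
    (x : Fin l → ℝ) : ∑ j, (x ᵥ* Q) j ^ 2 = x ⬝ᵥ x := by
  have : x ⬝ᵥ (Q * Qᵀ) *ᵥ x = x ⬝ᵥ x := by rw [hQ, one_mulVec]
  rw [← this, ← mulVec_mulVec, dotProduct_mulVec, mulVec_transpose, dotProduct]
  simp [sq]

-- nonzero kernel vector when one output coordinate always vanishes
lemma exists_ker_ne_zero {l : ℕ} (L : (Fin l → ℝ) →ₗ[ℝ] (Fin l → ℝ)) (j₀ : Fin l)
    (h : ∀ x, L x j₀ = 0) : ∃ x : Fin l → ℝ, x ≠ 0 ∧ L x = 0 := by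
  have hrange : LinearMap.range L ≤ LinearMap.ker (LinearMap.proj (R := ℝ) (φ := fun _ : Fin l => ℝ) j₀) := by
    rintro y ⟨x, rfl⟩
    simpa using h x
  have hne : LinearMap.ker (LinearMap.proj (R := ℝ) (φ := fun _ : Fin l => ℝ) j₀) ≠ ⊤ := by
    intro hT
    have hmem : (Pi.single j₀ (1:ℝ)) ∈ LinearMap.ker (LinearMap.proj (R := ℝ) (φ := fun _ : Fin l => ℝ) j₀) := by
      rw [hT]; trivial
    rw [LinearMap.mem_ker] at hmem
    simp at hmem
  have hlt : Module.finrank ℝ (LinearMap.ker (LinearMap.proj (R := ℝ) (φ := fun _ : Fin l => ℝ) j₀)) < l := by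
    have := Submodule.finrank_lt (K := ℝ) (V := Fin l → ℝ) hne
    simpa using this
  have hrk : Module.finrank ℝ (LinearMap.range L) < l :=
    lt_of_le_of_lt (Submodule.finrank_mono hrange) hlt
  have hsum := LinearMap.finrank_range_add_finrank_ker L
  have hker : 0 < Module.finrank ℝ (LinearMap.ker L) := by
    have : Module.finrank ℝ (Fin l → ℝ) = l := by simp
    omega
  have hbot : LinearMap.ker L ≠ ⊥ := by
    intro hb
    rw [hb] at hker; simp at hker
  obtain ⟨x, hx, hx0⟩ := Submodule.exists_mem_ne_zero_of_ne_bot hbot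
  exact ⟨x, hx0, hx⟩


lemma dot_self_pos {l : ℕ} {x : Fin l → ℝ} (hx : x ≠ 0) : 0 < x ⬝ᵥ x := by
  have h0 : (0:ℝ) ≤ x ⬝ᵥ x := Finset.sum_nonneg fun i _ => mul_self_nonneg _
  rcases h0.lt_or_eq with h | h
  · exact h
  · exact absurd (dotProduct_self_eq_zero.mp h.symm) hx

lemma keyA {l : ℕ} (k : ℕ) (hk : k + 1 < l)
    (Q W B : Matrix (Fin l) (Fin l) ℝ) (hQ : Q * Qᵀ = 1) (hW : W * Wᵀ = 1)
    (α μ : Fin l → ℝ) (hα : Antitone α) (hμ : Antitone μ)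
    (hCeq : Q * Matrix.diagonal α * Qᵀ - B = W * Matrix.diagonal μ * Wᵀ)
    (φ : (Fin l → ℝ) →ₗ[ℝ] ℝ) (hB : ∀ x, φ x = 0 → x ⬝ᵥ B *ᵥ x ≤ 0) :
    α ⟨k+1, hk⟩ ≤ μ ⟨k, by omega⟩ := by
  classical
  set L : (Fin l → ℝ) →ₗ[ℝ] (Fin l → ℝ) := LinearMap.pi (fun j =>
    if (j:ℕ) < k then LinearMap.proj j ∘ₗ W.vecMulLinear
    else if k+2 ≤ (j:ℕ) then LinearMap.proj j ∘ₗ Q.vecMulLinear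
    else if (j:ℕ) = k then φ else 0) with hL
  obtain ⟨x, hx0, hxker⟩ := exists_ker_ne_zero L ⟨k+1, hk⟩ (by
    intro x
    simp only [hL, LinearMap.pi_apply]
    rw [if_neg (by omega), if_neg (by omega), if_neg (by omega)]
    rfl)
  have hLx : ∀ j : Fin l, L x j = 0 := fun j => congrFun hxker j
  have hy : ∀ j : Fin l, (j:ℕ) < k → (x ᵥ* W) j = 0 := by
    intro j hj
    have := hLx j
    simp only [hL, LinearMap.pi_apply, if_pos hj] at this
    simpa using this
  have hc : ∀ j : Fin l, k+2 ≤ (j:ℕ) → (x ᵥ* Q) j = 0 := by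
    intro j hj
    have := hLx j
    simp only [hL, LinearMap.pi_apply, if_neg (by omega : ¬ (j:ℕ) < k), if_pos hj] at this
    simpa using this
  have hφ : φ x = 0 := by
    have := hLx ⟨k, by omega⟩
    simp only [hL, LinearMap.pi_apply] at this
    have h1 : ¬ (((⟨k, by omega⟩ : Fin l) : ℕ) < k) := by simp
    have h2 : ¬ (k + 2 ≤ ((⟨k, by omega⟩ : Fin l) : ℕ)) := by simp
    rw [if_neg h1, if_neg h2] at this
    simpa using this
  have hxx := dot_self_pos hx0
  have hAlow : α ⟨k+1, hk⟩ * (x ⬝ᵥ x) ≤ x ⬝ᵥ (Q * Matrix.diagonal α * Qᵀ) *ᵥ x := by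
    rw [quadform_diag, ← dot_self_conj Q hQ x, Finset.mul_sum]
    apply Finset.sum_le_sum
    intro j _
    by_cases hj : (j:ℕ) ≤ k+1
    · exact mul_le_mul_of_nonneg_right (hα (by simpa [Fin.le_def] using hj)) (sq_nonneg _)
    · rw [hc j (by omega)]; simp
  have hCup : x ⬝ᵥ (W * Matrix.diagonal μ * Wᵀ) *ᵥ x ≤ μ ⟨k, by omega⟩ * (x ⬝ᵥ x) := by
    rw [quadform_diag, ← dot_self_conj W hW x, Finset.mul_sum]
    apply Finset.sum_le_sum
    intro j _
    by_cases hj : k ≤ (j:ℕ)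
    · exact mul_le_mul_of_nonneg_right (hμ (by simpa [Fin.le_def] using hj)) (sq_nonneg _)
    · rw [hy j (by omega)]; simp
  have hsplit : x ⬝ᵥ (W * Matrix.diagonal μ * Wᵀ) *ᵥ x
      = x ⬝ᵥ (Q * Matrix.diagonal α * Qᵀ) *ᵥ x - x ⬝ᵥ B *ᵥ x := by
    rw [← hCeq, sub_mulVec, dotProduct_sub]
  have hBx := hB x hφ
  have : α ⟨k+1, hk⟩ * (x ⬝ᵥ x) ≤ μ ⟨k, by omega⟩ * (x ⬝ᵥ x) := by
    calc α ⟨k+1, hk⟩ * (x ⬝ᵥ x) ≤ x ⬝ᵥ (Q * Matrix.diagonal α * Qᵀ) *ᵥ x := hAlow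
    _ ≤ x ⬝ᵥ (Q * Matrix.diagonal α * Qᵀ) *ᵥ x - x ⬝ᵥ B *ᵥ x := by linarith
    _ = x ⬝ᵥ (W * Matrix.diagonal μ * Wᵀ) *ᵥ x := hsplit.symm
    _ ≤ μ ⟨k, by omega⟩ * (x ⬝ᵥ x) := hCup
  exact le_of_mul_le_mul_right (by simpa [mul_comm] using this) hxx

lemma keyB {l d : ℕ} (k : ℕ) (hdk : d ≤ k) (hk : k < l)
    (Q W B : Matrix (Fin l) (Fin l) ℝ) (hQ : Q * Qᵀ = 1) (hW : W * Wᵀ = 1)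
    (α μ : Fin l → ℝ) (hα : Antitone α) (hμ : Antitone μ)
    (hCeq : Q * Matrix.diagonal α * Qᵀ - B = W * Matrix.diagonal μ * Wᵀ)
    (ψ : (Fin l → ℝ) →ₗ[ℝ] (Fin d → ℝ)) (hB : ∀ x, ψ x = 0 → 0 ≤ x ⬝ᵥ B *ᵥ x) :
    μ ⟨k, hk⟩ ≤ α ⟨k - d, by omega⟩ := by
  classical
  set L : (Fin l → ℝ) →ₗ[ℝ] (Fin l → ℝ) := LinearMap.pi (fun j =>
    if k < (j:ℕ) then LinearMap.proj j ∘ₗ W.vecMulLinear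
    else if (j:ℕ) < k - d then LinearMap.proj j ∘ₗ Q.vecMulLinear
    else if hj2 : (j:ℕ) - (k - d) < d then
      LinearMap.proj (⟨(j:ℕ) - (k - d), hj2⟩ : Fin d) ∘ₗ ψ else 0) with hL
  obtain ⟨x, hx0, hxker⟩ := exists_ker_ne_zero L ⟨k, hk⟩ (by
    intro x
    simp only [hL, LinearMap.pi_apply]
    have h1 : ¬ (k < ((⟨k, hk⟩ : Fin l) : ℕ)) := by simp
    have h2 : ¬ (((⟨k, hk⟩ : Fin l) : ℕ) < k - d) := by simp
    have h3 : ¬ (((⟨k, hk⟩ : Fin l) : ℕ) - (k - d) < d) := by simp; omega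
    rw [if_neg h1, if_neg h2, dif_neg h3]
    rfl)
  have hLx : ∀ j : Fin l, L x j = 0 := fun j => congrFun hxker j
  have hy : ∀ j : Fin l, k < (j:ℕ) → (x ᵥ* W) j = 0 := by
    intro j hj
    have := hLx j
    simp only [hL, LinearMap.pi_apply, if_pos hj] at this
    simpa using this
  have hc : ∀ j : Fin l, (j:ℕ) < k - d → (x ᵥ* Q) j = 0 := by
    intro j hj
    have := hLx j
    simp only [hL, LinearMap.pi_apply, if_neg (by omega : ¬ k < (j:ℕ)), if_pos hj] at this
    simpa using this
  have hψ : ψ x = 0 := by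
    funext r
    have hjlt : (k - d) + (r:ℕ) < l := by have := r.isLt; omega
    have := hLx ⟨(k - d) + (r:ℕ), hjlt⟩
    simp only [hL, LinearMap.pi_apply] at this
    have h1 : ¬ (k < (((⟨(k - d) + (r:ℕ), hjlt⟩ : Fin l)) : ℕ)) := by simp; have := r.isLt; omega
    have h2 : ¬ ((((⟨(k - d) + (r:ℕ), hjlt⟩ : Fin l)) : ℕ) < k - d) := by simp
    have h3 : (((⟨(k - d) + (r:ℕ), hjlt⟩ : Fin l)) : ℕ) - (k - d) < d := by simp
    rw [if_neg h1, if_neg h2, dif_pos h3] at this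
    have hr : (⟨(((⟨(k - d) + (r:ℕ), hjlt⟩ : Fin l)) : ℕ) - (k - d), h3⟩ : Fin d) = r := by
      apply Fin.ext; simp
    rw [hr] at this
    simpa using this
  have hxx := dot_self_pos hx0
  have hAup : x ⬝ᵥ (Q * Matrix.diagonal α * Qᵀ) *ᵥ x ≤ α ⟨k - d, by omega⟩ * (x ⬝ᵥ x) := by
    rw [quadform_diag, ← dot_self_conj Q hQ x, Finset.mul_sum]
    apply Finset.sum_le_sum
    intro j _
    by_cases hj : k - d ≤ (j:ℕ)
    · exact mul_le_mul_of_nonneg_right (hα (by simpa [Fin.le_def] using hj)) (sq_nonneg _)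
    · rw [hc j (by omega)]; simp
  have hClow : μ ⟨k, hk⟩ * (x ⬝ᵥ x) ≤ x ⬝ᵥ (W * Matrix.diagonal μ * Wᵀ) *ᵥ x := by
    rw [quadform_diag, ← dot_self_conj W hW x, Finset.mul_sum]
    apply Finset.sum_le_sum
    intro j _
    by_cases hj : (j:ℕ) ≤ k
    · exact mul_le_mul_of_nonneg_right (hμ (by simpa [Fin.le_def] using hj)) (sq_nonneg _)
    · rw [hy j (by omega)]; simp
  have hsplit : x ⬝ᵥ (W * Matrix.diagonal μ * Wᵀ) *ᵥ x
      = x ⬝ᵥ (Q * Matrix.diagonal α * Qᵀ) *ᵥ x - x ⬝ᵥ B *ᵥ x := by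
    rw [← hCeq, sub_mulVec, dotProduct_sub]
  have hBx := hB x hψ
  have : μ ⟨k, hk⟩ * (x ⬝ᵥ x) ≤ α ⟨k - d, by omega⟩ * (x ⬝ᵥ x) := by
    calc μ ⟨k, hk⟩ * (x ⬝ᵥ x) ≤ x ⬝ᵥ (W * Matrix.diagonal μ * Wᵀ) *ᵥ x := hClow
    _ = x ⬝ᵥ (Q * Matrix.diagonal α * Qᵀ) *ᵥ x - x ⬝ᵥ B *ᵥ x := hsplit
    _ ≤ x ⬝ᵥ (Q * Matrix.diagonal α * Qᵀ) *ᵥ x := by linarith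
    _ ≤ α ⟨k - d, by omega⟩ * (x ⬝ᵥ x) := hAup
  exact le_of_mul_le_mul_right (by simpa [mul_comm] using this) hxx


lemma sorted_spectral {l : ℕ} (C : Matrix (Fin l) (Fin l) ℝ) (hC : C.IsHermitian) :
    ∃ (W : Matrix (Fin l) (Fin l) ℝ) (μ : Fin l → ℝ),
      W * Wᵀ = 1 ∧ Antitone μ ∧ C = W * Matrix.diagonal μ * Wᵀ := by
  classical
  set U : Matrix (Fin l) (Fin l) ℝ := (hC.eigenvectorUnitary : Matrix (Fin l) (Fin l) ℝ) with hU
  have hUU : U * Uᵀ = 1 := by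
    have := (Matrix.mem_unitaryGroup_iff).mp hC.eigenvectorUnitary.2
    rwa [Matrix.star_eq_conjTranspose, Matrix.conjTranspose_eq_transpose_of_trivial] at this
  have hspec : C = U * Matrix.diagonal hC.eigenvalues * Uᵀ := by
    have := hC.spectral_theorem
    rw [Unitary.conjStarAlgAut_apply] at this
    rw [Matrix.star_eq_conjTranspose, Matrix.conjTranspose_eq_transpose_of_trivial] at this
    simpa using this
  set ν := hC.eigenvalues with hν
  set σ : Equiv.Perm (Fin l) := Tuple.sort (fun i => -ν i) with hσ
  have hmono : Monotone ((fun i => -ν i) ∘ σ) := Tuple.monotone_sort _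
  refine ⟨U.submatrix id σ, ν ∘ σ, ?_, ?_, ?_⟩
  · have : (U.submatrix id σ)ᵀ = Uᵀ.submatrix σ id := by
      ext i j; simp [Matrix.submatrix, Matrix.transpose_apply]
    rw [this, Matrix.submatrix_mul_equiv, hUU]
    rfl
  · intro a b hab
    have := hmono hab
    simpa using this
  · have hd : Matrix.diagonal (ν ∘ σ) = (Matrix.diagonal ν).submatrix σ σ := by
      rw [Matrix.submatrix_diagonal ν σ σ.injective]
    have htr : (U.submatrix id σ)ᵀ = Uᵀ.submatrix σ id := by
      ext i j; simp [Matrix.submatrix, Matrix.transpose_apply]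
    rw [hd, htr, Matrix.submatrix_mul_equiv, Matrix.submatrix_mul_equiv]
    simpa using hspec


lemma frobSq_conj_diag {l : ℕ} (Q : Matrix (Fin l) (Fin l) ℝ) (hQ : Qᵀ * Q = 1)
    (v : Fin l → ℝ) :
    frobSq (Q * Matrix.diagonal v * Qᵀ) = ∑ i, v i ^ 2 := by
  rw [frobSq, frobSq_eq_trace]
  have htr : (Q * Matrix.diagonal v * Qᵀ)ᵀ = Q * Matrix.diagonal v * Qᵀ := by
    simp [Matrix.transpose_mul, Matrix.diagonal_transpose, Matrix.mul_assoc]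
  rw [htr]
  have key : Qᵀ * (Q * Matrix.diagonal v * Qᵀ) = Matrix.diagonal v * Qᵀ := by
    rw [← Matrix.mul_assoc, ← Matrix.mul_assoc, hQ, Matrix.one_mul]
  have : Q * Matrix.diagonal v * Qᵀ * (Q * Matrix.diagonal v * Qᵀ)
      = Q * (Matrix.diagonal v * Matrix.diagonal v) * Qᵀ := by
    rw [Matrix.mul_assoc (Q * Matrix.diagonal v) Qᵀ _, key, ← Matrix.mul_assoc,
      Matrix.mul_assoc Q]
  rw [this, Matrix.trace_mul_comm (Q * (Matrix.diagonal v * Matrix.diagonal v)) Qᵀ,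
    ← Matrix.mul_assoc, hQ, Matrix.one_mul, Matrix.diagonal_mul_diagonal,
    Matrix.trace_diagonal]
  simp [sq]

lemma colIdx_injective {d l : ℕ} (hd : 1 ≤ d) (hl : d + 1 ≤ l) :
    Function.Injective (colIdx (d := d) hl) := by
  intro j j' h
  unfold colIdx at h
  by_cases h1 : (j:ℕ) = 0 <;> by_cases h2 : (j':ℕ) = 0 <;>
    simp [h1, h2, Fin.ext_iff] at h ⊢ <;> omega

lemma colIdx_mem {d l : ℕ} (hd : 1 ≤ d) (hl : d + 1 ≤ l) (k : Fin l) :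
    (k ∈ Finset.univ.image (colIdx (d := d) hl)) ↔ ¬(1 ≤ (k:ℕ) ∧ (k:ℕ) < l - d) := by
  constructor
  · rintro hk
    obtain ⟨j, -, rfl⟩ := Finset.mem_image.mp hk
    unfold colIdx
    by_cases h1 : (j:ℕ) = 0 <;> simp [h1] <;> omega
  · intro hk
    apply Finset.mem_image.mpr
    by_cases h0 : (k:ℕ) = 0
    · exact ⟨⟨0, by omega⟩, Finset.mem_univ _, by simp [colIdx, Fin.ext_iff, h0.symm]⟩
    · have hk2 : l - d ≤ (k:ℕ) := by omega
      refine ⟨⟨(k:ℕ) - (l - d - 1), by have := k.isLt; omega⟩, Finset.mem_univ _, ?_⟩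
      have : (((⟨(k:ℕ) - (l - d - 1), by have := k.isLt; omega⟩ : Fin (d+1))) : ℕ) ≠ 0 := by
        simp; omega
      simp only [colIdx, if_neg this]
      apply Fin.ext
      simp
      have := k.isLt
      omega

lemma opt_eq {d l : ℕ} (hd : 1 ≤ d) (hl : d + 1 ≤ l) (Q : Matrix (Fin l) (Fin l) ℝ)
    (lam : Fin l → ℝ) (hpos : 0 ≤ lam ⟨0, Nat.lt_of_lt_of_le (Nat.succ_pos d) hl⟩)
    (hneg : ∀ i : Fin l, l - d ≤ (i : ℕ) → lam i ≤ 0) :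
    hatXL hl Q lam * lorJ d * (hatXL hl Q lam)ᵀ
      = Q * Matrix.diagonal (fun k : Fin l => if 1 ≤ (k:ℕ) ∧ (k:ℕ) < l - d then 0 else lam k) * Qᵀ := by
  ext i i'
  rw [lorJ, conj_diag_entry, conj_diag_entry]
  have hterm : ∀ j : Fin (d+1),
      (if j = 0 then (1:ℝ) else -1) * hatXL hl Q lam i j * hatXL hl Q lam i' j
      = lam (colIdx hl j) * Q i (colIdx hl j) * Q i' (colIdx hl j) := by
    intro j
    by_cases h0 : j = 0
    · have h0' : (j:ℕ) = 0 := by simp [h0]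
      have hc0 : colIdx hl j = ⟨0, by omega⟩ := by simp [colIdx, h0']
      have hsq : Real.sqrt (lam (colIdx hl j)) * Real.sqrt (lam (colIdx hl j))
          = lam (colIdx hl j) := Real.mul_self_sqrt (by rw [hc0]; exact hpos)
      have hsq2 : Real.sqrt (lam (colIdx hl j)) ^ 2 = lam (colIdx hl j) := by
        rw [sq]; exact hsq
      simp only [hatXL, Matrix.of_apply, if_pos h0, if_pos h0']
      ring_nf
      rw [hsq2]; ring
    · have h0' : ¬ (j:ℕ) = 0 := by intro h; exact h0 (Fin.ext (by simp [h]))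
      have hge : l - d ≤ ((colIdx hl j : Fin l) : ℕ) := by
        simp [colIdx, h0']
        have := j.isLt
        omega
      have hsq : Real.sqrt (-lam (colIdx hl j)) * Real.sqrt (-lam (colIdx hl j))
          = -lam (colIdx hl j) := Real.mul_self_sqrt (by linarith [hneg _ hge])
      have hsq2 : Real.sqrt (-lam (colIdx hl j)) ^ 2 = -lam (colIdx hl j) := by
        rw [sq]; exact hsq
      simp only [hatXL, Matrix.of_apply, if_neg h0, if_neg h0']
      ring_nf
      rw [hsq2]; ring
  rw [Finset.sum_congr rfl (fun j _ => hterm j)]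
  have hinj : ∀ x ∈ Finset.univ, ∀ y ∈ (Finset.univ : Finset (Fin (d+1))),
      colIdx hl x = colIdx hl y → x = y := fun x _ y _ h => colIdx_injective hd hl h
  rw [← Finset.sum_image (f := fun k : Fin l => lam k * Q i k * Q i' k) hinj]
  have h1 : ∑ k ∈ Finset.univ.image (colIdx (d := d) hl),
        (if 1 ≤ (k:ℕ) ∧ (k:ℕ) < l - d then (0:ℝ) else lam k) * Q i k * Q i' k
      = ∑ k : Fin l, (if 1 ≤ (k:ℕ) ∧ (k:ℕ) < l - d then (0:ℝ) else lam k) * Q i k * Q i' k := by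
    apply Finset.sum_subset (Finset.subset_univ _)
    intro k _ hk
    have : (1 ≤ (k:ℕ) ∧ (k:ℕ) < l - d) := by
      by_contra hcon
      exact hk ((colIdx_mem hd hl k).mpr hcon)
    rw [if_pos this, zero_mul, zero_mul]
  rw [← h1]
  apply Finset.sum_congr rfl
  intro k hk
  rw [if_neg ((colIdx_mem hd hl k).mp hk)]
/-- the minimum of `‖A_L − X J Xᵀ‖_F²` over all
`X ∈ ℝ^{l×(d+1)}` equals `Σ_{i=2}^{l−d} λ_i²`; in particular if those
eigenvalues vanish, `A_L` is represented exactly. -/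
theorem stmt_15 {d l : ℕ} (hd : 1 ≤ d) (hl : d + 1 ≤ l)
    (A_L : Matrix (Fin l) (Fin l) ℝ) (hsym : A_Lᵀ = A_L)
    (Q : Matrix (Fin l) (Fin l) ℝ) (hQ : Qᵀ * Q = 1)
    (lam : Fin l → ℝ) (hdesc : ∀ i j : Fin l, i ≤ j → lam j ≤ lam i)
    (hdecomp : A_L = Q * Matrix.diagonal lam * Qᵀ)
    (hpos : 0 ≤ lam ⟨0, by omega⟩)
    (hneg : ∀ i : Fin l, l - d ≤ (i : ℕ) → lam i ≤ 0) :
    IsLeast {r : ℝ | ∃ X : Matrix (Fin l) (Fin (d + 1)) ℝ, r = frobSq (A_L - X * lorJ d * Xᵀ)}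
      (∑ i ∈ Finset.univ.filter (fun i : Fin l => 1 ≤ (i : ℕ) ∧ (i : ℕ) < l - d), lam i ^ 2) ∧
    ((∀ i : Fin l, 1 ≤ (i : ℕ) → (i : ℕ) < l - d → lam i = 0) →
      ∃ X : Matrix (Fin l) (Fin (d + 1)) ℝ, A_L = X * lorJ d * Xᵀ) := by

  classical
  have hQQt : Q * Qᵀ = 1 := mul_eq_one_comm.mp hQ
  have hα : Antitone lam := fun i j h => hdesc i j h
  have hopt := opt_eq hd hl Q lam hpos hneg
  have hXopt : A_L - hatXL hl Q lam * lorJ d * (hatXL hl Q lam)ᵀ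
      = Q * Matrix.diagonal (fun k : Fin l =>
          if 1 ≤ (k:ℕ) ∧ (k:ℕ) < l - d then lam k else 0) * Qᵀ := by
    have harr : (fun k : Fin l =>
          lam k - if 1 ≤ (k:ℕ) ∧ (k:ℕ) < l - d then (0:ℝ) else lam k)
        = fun k : Fin l => if 1 ≤ (k:ℕ) ∧ (k:ℕ) < l - d then lam k else 0 := by
      funext k
      by_cases hk : 1 ≤ (k:ℕ) ∧ (k:ℕ) < l - d
      · rw [if_pos hk, if_pos hk]; ring
      · rw [if_neg hk, if_neg hk]; ring
    rw [hdecomp, hopt, ← Matrix.sub_mul, ← Matrix.mul_sub, Matrix.diagonal_sub, harr]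
  have hval : frobSq (A_L - hatXL hl Q lam * lorJ d * (hatXL hl Q lam)ᵀ)
      = ∑ i ∈ Finset.univ.filter (fun i : Fin l => 1 ≤ (i:ℕ) ∧ (i:ℕ) < l - d),
          lam i ^ 2 := by
    rw [hXopt, frobSq_conj_diag Q hQ, Finset.sum_filter]
    apply Finset.sum_congr rfl
    intro k _
    by_cases hk : 1 ≤ (k:ℕ) ∧ (k:ℕ) < l - d
    · rw [if_pos hk, if_pos hk]
    · rw [if_neg hk, if_neg hk]
      simp
  refine ⟨⟨⟨hatXL hl Q lam, hval.symm⟩, ?_⟩, ?_⟩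
  · -- lower bound
    rintro r ⟨X, rfl⟩
    set B : Matrix (Fin l) (Fin l) ℝ := X * lorJ d * Xᵀ with hB
    have hBsym : Bᵀ = B := by
      rw [hB, Matrix.transpose_mul, Matrix.transpose_mul, Matrix.transpose_transpose,
        Matrix.mul_assoc]
      congr 1
      rw [lorJ, Matrix.diagonal_transpose]
    have hCsym : (A_L - B).IsHermitian := by
      rw [Matrix.IsHermitian, Matrix.conjTranspose_eq_transpose_of_trivial,
        Matrix.transpose_sub, hsym, hBsym]
    obtain ⟨W, μ, hWW, hμ, hCdec⟩ := sorted_spectral (A_L - B) hCsym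
    have hWtW : Wᵀ * W = 1 := mul_eq_one_comm.mp hWW
    have hCeq : Q * Matrix.diagonal lam * Qᵀ - B = W * Matrix.diagonal μ * Wᵀ := by
      rw [← hdecomp]; exact hCdec
    have hquadB : ∀ x : Fin l → ℝ, x ⬝ᵥ B *ᵥ x
        = ∑ j : Fin (d+1), (if j = 0 then (1:ℝ) else -1) * (x ᵥ* X) j ^ 2 :=
      fun x => quadform_diag X _ x
    have hkeyA : ∀ (k : ℕ) (hk : k + 1 < l),
        lam ⟨k+1, hk⟩ ≤ μ ⟨k, by omega⟩ := by
      intro k hk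
      apply keyA k hk Q W B hQQt hWW lam μ hα hμ hCeq
        ((LinearMap.proj (0 : Fin (d+1))) ∘ₗ X.vecMulLinear)
      intro x hx
      have hx0 : (x ᵥ* X) 0 = 0 := by simpa using hx
      rw [hquadB x]
      apply Finset.sum_nonpos
      intro j _
      by_cases hj : j = 0
      · subst hj; rw [hx0]; simp
      · rw [if_neg hj]
        have := sq_nonneg ((x ᵥ* X) j)
        linarith
    have hkeyB : ∀ (k : ℕ) (hdk : d ≤ k) (hk : k < l),
        μ ⟨k, hk⟩ ≤ lam ⟨k - d, by omega⟩ := by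
      intro k hdk hk
      apply keyB k hdk hk Q W B hQQt hWW lam μ hα hμ hCeq
        (LinearMap.pi (fun r : Fin d =>
          (LinearMap.proj (r.succ : Fin (d+1))) ∘ₗ X.vecMulLinear))
      intro x hx
      have hxr : ∀ r : Fin d, (x ᵥ* X) r.succ = 0 := by
        intro r
        have := congrFun hx r
        simpa using this
      rw [hquadB x, Fin.sum_univ_succ]
      have hrest : ∀ r : Fin d,
          (if (r.succ : Fin (d+1)) = 0 then (1:ℝ) else -1) * (x ᵥ* X) r.succ ^ 2 = 0 := by
        intro r
        rw [hxr r]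
        simp
      rw [Finset.sum_congr rfl (fun r _ => hrest r)]
      simp [sq_nonneg]
    have hfrob : frobSq (A_L - B) = ∑ jj, μ jj ^ 2 := by
      rw [hCdec, frobSq_conj_diag W hWtW]
    rw [hfrob]
    -- the injection from middle indices into eigenvalue indices of C
    set f : Fin l → Fin l := fun i =>
      if 0 ≤ lam i then ⟨(i:ℕ) - 1, by have := i.isLt; omega⟩
      else ⟨min ((i:ℕ) + d) (l - 1), by omega⟩ with hf
    have hkey : ∀ i ∈ Finset.univ.filter
        (fun i : Fin l => 1 ≤ (i:ℕ) ∧ (i:ℕ) < l - d), lam i ^ 2 ≤ μ (f i) ^ 2 := by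
      intro i hi
      obtain ⟨hi1, hi2⟩ := (Finset.mem_filter.mp hi).2
      by_cases hpi : 0 ≤ lam i
      · have hk : ((i:ℕ) - 1) + 1 < l := by have := i.isLt; omega
        have h1 := hkeyA ((i:ℕ) - 1) hk
        have hieq : (⟨(i:ℕ) - 1 + 1, hk⟩ : Fin l) = i := by
          apply Fin.ext; simp; omega
        rw [hieq] at h1
        have hfi : f i = ⟨(i:ℕ) - 1, by omega⟩ := by rw [hf]; simp [hpi]
        rw [hfi]
        exact pow_le_pow_left₀ hpi h1 2
      · push_neg at hpi
        have hdk : d ≤ (i:ℕ) + d := by omega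
        have hk : (i:ℕ) + d < l := by omega
        have h1 := hkeyB ((i:ℕ) + d) hdk hk
        have hieq : (⟨(i:ℕ) + d - d, by omega⟩ : Fin l) = i := by
          apply Fin.ext; simp
        rw [hieq] at h1
        have hfi : f i = ⟨(i:ℕ) + d, hk⟩ := by
          rw [hf]
          simp only [if_neg (not_le.mpr hpi)]
          apply Fin.ext
          simp
          omega
        rw [hfi]
        have h2 : -lam i ≤ -(μ ⟨(i:ℕ) + d, hk⟩) := by linarith
        have h3 : (0:ℝ) ≤ -lam i := by linarith
        calc lam i ^ 2 = (-lam i) ^ 2 := by ring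
        _ ≤ (-(μ ⟨(i:ℕ) + d, hk⟩)) ^ 2 := pow_le_pow_left₀ h3 h2 2
        _ = μ ⟨(i:ℕ) + d, hk⟩ ^ 2 := by ring
    have hinj : ∀ x ∈ Finset.univ.filter
          (fun i : Fin l => 1 ≤ (i:ℕ) ∧ (i:ℕ) < l - d),
        ∀ y ∈ Finset.univ.filter
          (fun i : Fin l => 1 ≤ (i:ℕ) ∧ (i:ℕ) < l - d), f x = f y → x = y := by
      intro x hx y hy hxy
      obtain ⟨hx1, hx2⟩ := (Finset.mem_filter.mp hx).2
      obtain ⟨hy1, hy2⟩ := (Finset.mem_filter.mp hy).2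
      rw [hf] at hxy
      simp only at hxy
      by_cases hpx : 0 ≤ lam x <;> by_cases hpy : 0 ≤ lam y
      · rw [if_pos hpx, if_pos hpy, Fin.mk.injEq] at hxy
        apply Fin.ext; omega
      · rw [if_pos hpx, if_neg hpy, Fin.mk.injEq] at hxy
        exfalso
        have hyx : y ≤ x := by rw [Fin.le_def]; omega
        have := hα hyx
        push_neg at hpy
        linarith
      · rw [if_neg hpx, if_pos hpy, Fin.mk.injEq] at hxy
        exfalso
        have hyx : x ≤ y := by rw [Fin.le_def]; omega
        have := hα hyx
        push_neg at hpx
        linarith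
      · rw [if_neg hpx, if_neg hpy, Fin.mk.injEq] at hxy
        apply Fin.ext; omega
    calc ∑ i ∈ Finset.univ.filter (fun i : Fin l => 1 ≤ (i:ℕ) ∧ (i:ℕ) < l - d),
          lam i ^ 2
        ≤ ∑ i ∈ Finset.univ.filter (fun i : Fin l => 1 ≤ (i:ℕ) ∧ (i:ℕ) < l - d),
          μ (f i) ^ 2 := Finset.sum_le_sum hkey
      _ = ∑ j ∈ (Finset.univ.filter
            (fun i : Fin l => 1 ≤ (i:ℕ) ∧ (i:ℕ) < l - d)).image f,
          μ j ^ 2 := by rw [Finset.sum_image hinj]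
      _ ≤ ∑ jj, μ jj ^ 2 := Finset.sum_le_sum_of_subset_of_nonneg
          (Finset.subset_univ _) (fun j _ _ => sq_nonneg _)
  · -- exact representation when middle eigenvalues vanish
    intro h0
    refine ⟨hatXL hl Q lam, ?_⟩
    have hz : (fun k : Fin l => if 1 ≤ (k:ℕ) ∧ (k:ℕ) < l - d then lam k else 0)
        = fun _ => (0:ℝ) := by
      funext k
      by_cases hk : 1 ≤ (k:ℕ) ∧ (k:ℕ) < l - d
      · rw [if_pos hk]; exact h0 k hk.1 hk.2
      · rw [if_neg hk]
    have := hXopt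
    rw [hz] at this
    simp only [Matrix.diagonal_zero, Matrix.mul_zero, Matrix.zero_mul] at this
    exact sub_eq_zero.mp this
end
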